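/- The Hellinger transform is multiplicative under products and sub-multiplicative over convex hulls: for classes P1, P2, Q1, Q2 of finite measures and 0 < α < 1, ρ_α(P1 × P2, Q1 × Q2) ≤ ρ_α(P1, Q1) · ρ_α(P2, Q2), where ρ_α(P, Q) = sup{∫ p^α q^{1-α} dμ : P ∈ conv(P), Q ∈ conv(Q)} and P1 × P2 denotes the class of product measures {P1 × P2 : Pi ∈ Pi}. -/

import Mathlib

open MeasureTheory Real

section AuxiliaryLemmas
open NNReal

section Aux

set_option linter.unusedSectionVars false
variable {X : Type*} [MeasurableSpace X] {μ : Measure X} {α : ℝ}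

/-- Representation of an element of a convex hull of functions as a finite convex combination. -/
lemma auxHullRep {s : Set (X → ℝ)} {p : X → ℝ} (hp : p ∈ convexHull ℝ s) :
    ∃ (ι : Type) (_ : Fintype ι) (w : ι → ℝ) (z : ι → X → ℝ),
      (∀ i, 0 ≤ w i) ∧ ∑ i, w i = 1 ∧ (∀ i, z i ∈ s) ∧ ∀ x, p x = ∑ i, w i * z i x := by
  rw [mem_convexHull_iff_exists_fintype] at hp
  obtain ⟨ι, hι, w, z, hw0, hw1, hz, hx⟩ := hp
  refine ⟨ι, hι, w, z, hw0, hw1, hz, fun x => ?_⟩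
  rw [← hx]
  simp [Finset.sum_apply]

lemma auxMemHull {s : Set (X → ℝ)} {ι : Type*} [Fintype ι] (w : ι → ℝ) (z : ι → X → ℝ)
    (hw0 : ∀ i, 0 ≤ w i) (hw1 : ∑ i, w i = 1) (hz : ∀ i, z i ∈ s) :
    (fun x => ∑ i, w i * z i x) ∈ convexHull ℝ s :=
  mem_convexHull_of_exists_fintype w z hw0 hw1 hz (by
    funext x; simp [Finset.sum_apply])

lemma auxRegular {s : Set (X → ℝ)}
    (hs : ∀ f ∈ s, Measurable f ∧ (∀ x, 0 ≤ f x) ∧ Integrable f μ)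
    {p : X → ℝ} (hp : p ∈ convexHull ℝ s) :
    Measurable p ∧ (∀ x, 0 ≤ p x) ∧ Integrable p μ := by
  obtain ⟨ι, _, w, z, hw0, hw1, hz, hrep⟩ := auxHullRep hp
  have hp' : p = fun x => ∑ i, w i * z i x := funext hrep
  rw [hp']
  refine ⟨Finset.measurable_sum _ fun i _ => ((hs _ (hz i)).1.const_mul (w i)),
    fun x => Finset.sum_nonneg fun i _ => mul_nonneg (hw0 i) ((hs _ (hz i)).2.1 x),
    integrable_finset_sum _ fun i _ => ((hs _ (hz i)).2.2.const_mul (w i))⟩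

lemma auxTwoRpow {a b : ℝ} (ha : 0 ≤ a) (hb : 0 ≤ b) (h0 : 0 ≤ α) (h1 : α ≤ 1) :
    (a + b) ^ α ≤ a ^ α + b ^ α := by
  have h := NNReal.rpow_add_le_add_rpow (⟨a, ha⟩ : ℝ≥0) ⟨b, hb⟩ h0 h1
  have h' := (NNReal.coe_le_coe).2 h
  exact h'

lemma auxSumRpow {ι : Type*} (s : Finset ι) (f : ι → ℝ) (hf : ∀ i, 0 ≤ f i)
    (h0 : 0 < α) (h1 : α ≤ 1) : (∑ i ∈ s, f i) ^ α ≤ ∑ i ∈ s, f i ^ α := by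
  induction s using Finset.cons_induction with
  | empty => simp [Real.zero_rpow h0.ne']
  | cons a s ha ih =>
    rw [Finset.sum_cons, Finset.sum_cons]
    calc (f a + ∑ i ∈ s, f i) ^ α ≤ f a ^ α + (∑ i ∈ s, f i) ^ α :=
          auxTwoRpow (hf a) (Finset.sum_nonneg fun i _ => hf i) h0.le h1
      _ ≤ _ := add_le_add (le_refl _) ih

lemma auxIntegrand {f g : X → ℝ} (hfm : Measurable f) (hf0 : ∀ x, 0 ≤ f x)
    (hfi : Integrable f μ) (hgm : Measurable g) (hg0 : ∀ x, 0 ≤ g x) (hgi : Integrable g μ)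
    (hα : α ∈ Set.Ioo (0 : ℝ) 1) :
    Integrable (fun x => f x ^ α * g x ^ (1 - α)) μ := by
  have h1α : (0 : ℝ) ≤ 1 - α := by linarith [hα.2]
  have hm : Measurable fun x => f x ^ α * g x ^ (1 - α) :=
    ((Real.continuous_rpow_const hα.1.le).measurable.comp hfm).mul
      ((Real.continuous_rpow_const h1α).measurable.comp hgm)
  refine Integrable.mono' ((hfi.const_mul α).add (hgi.const_mul (1 - α)))
    hm.aestronglyMeasurable (Filter.Eventually.of_forall fun x => ?_)
  rw [Real.norm_eq_abs, abs_of_nonneg (mul_nonneg (Real.rpow_nonneg (hf0 x) _)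
    (Real.rpow_nonneg (hg0 x) _))]
  exact Real.geom_mean_le_arith_mean2_weighted hα.1.le h1α (hf0 x) (hg0 x) (by ring)

end Aux
section HSet

/-- The set whose supremum is `rhoHull`. -/
def hSet {X : Type*} [MeasurableSpace X] (μ : Measure X) (α : ℝ)
    (Ps Qs : Set (X → ℝ)) : Set ℝ :=
  {r | ∃ p ∈ convexHull ℝ Ps, ∃ q ∈ convexHull ℝ Qs,
    r = ∫ x, p x ^ α * q x ^ (1 - α) ∂μ}

variable {X Y : Type*} [MeasurableSpace X] [MeasurableSpace Y] {μ : Measure X} {α : ℝ}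

lemma hSet_nonneg {Ps Qs : Set (X → ℝ)}
    (hPs : ∀ f ∈ Ps, Measurable f ∧ (∀ x, 0 ≤ f x) ∧ Integrable f μ)
    (hQs : ∀ f ∈ Qs, Measurable f ∧ (∀ x, 0 ≤ f x) ∧ Integrable f μ) :
    ∀ r ∈ hSet μ α Ps Qs, 0 ≤ r := by
  rintro r ⟨p, hp, q, hq, rfl⟩
  exact integral_nonneg fun x => mul_nonneg
    (Real.rpow_nonneg ((auxRegular hPs hp).2.1 x) _)
    (Real.rpow_nonneg ((auxRegular hQs hq).2.1 x) _)

lemma auxProdMemHull {P1 : Set (X → ℝ)} {P2 : Set (Y → ℝ)} {p1 : X → ℝ} {p2 : Y → ℝ}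
    (h1 : p1 ∈ convexHull ℝ P1) (h2 : p2 ∈ convexHull ℝ P2) :
    (fun z : X × Y => p1 z.1 * p2 z.2) ∈
      convexHull ℝ {f | ∃ a ∈ P1, ∃ b ∈ P2, f = fun z : X × Y => a z.1 * b z.2} := by
  obtain ⟨ι, _, w, z, hw0, hw1, hz, hrep1⟩ := auxHullRep h1
  obtain ⟨κ, _, v, u, hv0, hv1, hu, hrep2⟩ := auxHullRep h2
  refine mem_convexHull_of_exists_fintype (fun ik : ι × κ => w ik.1 * v ik.2)
    (fun ik => fun zz : X × Y => z ik.1 zz.1 * u ik.2 zz.2)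
    (fun ik => mul_nonneg (hw0 ik.1) (hv0 ik.2)) ?_ (fun ik => ⟨z ik.1, hz ik.1, u ik.2, hu ik.2, rfl⟩) ?_
  · rw [Fintype.sum_prod_type]
    simp_rw [← Finset.mul_sum, hv1, mul_one, hw1]
  · funext zz
    rw [Finset.sum_apply]
    simp only [Pi.smul_apply, smul_eq_mul]
    rw [hrep1 zz.1, hrep2 zz.2, Fintype.sum_mul_sum, Fintype.sum_prod_type]
    exact Finset.sum_congr rfl fun i _ => Finset.sum_congr rfl fun k _ => by ring

lemma auxProdFact (μ1 : Measure X) (μ2 : Measure Y) [SigmaFinite μ1] [SigmaFinite μ2]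
    {p1 q1 : X → ℝ} {p2 q2 : Y → ℝ}
    (hp1 : ∀ x, 0 ≤ p1 x) (hp2 : ∀ y, 0 ≤ p2 y) (hq1 : ∀ x, 0 ≤ q1 x) (hq2 : ∀ y, 0 ≤ q2 y) :
    ∫ zz : X × Y, (p1 zz.1 * p2 zz.2) ^ α * (q1 zz.1 * q2 zz.2) ^ (1 - α) ∂(μ1.prod μ2)
      = (∫ x, p1 x ^ α * q1 x ^ (1 - α) ∂μ1) * ∫ y, p2 y ^ α * q2 y ^ (1 - α) ∂μ2 := by
  rw [← MeasureTheory.integral_prod_mul (μ := μ1) (ν := μ2)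
    (f := fun x => p1 x ^ α * q1 x ^ (1 - α)) (g := fun y => p2 y ^ α * q2 y ^ (1 - α))]
  congr 1
  funext zz
  rw [Real.mul_rpow (hp1 zz.1) (hp2 zz.2), Real.mul_rpow (hq1 zz.1) (hq2 zz.2)]
  ring

lemma auxProdMemHSet (μ1 : Measure X) (μ2 : Measure Y) [SigmaFinite μ1] [SigmaFinite μ2]
    {P1 Q1 : Set (X → ℝ)} {P2 Q2 : Set (Y → ℝ)}
    (hP1 : ∀ p ∈ P1, Measurable p ∧ (∀ x, 0 ≤ p x) ∧ Integrable p μ1)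
    (hQ1 : ∀ q ∈ Q1, Measurable q ∧ (∀ x, 0 ≤ q x) ∧ Integrable q μ1)
    (hP2 : ∀ p ∈ P2, Measurable p ∧ (∀ y, 0 ≤ p y) ∧ Integrable p μ2)
    (hQ2 : ∀ q ∈ Q2, Measurable q ∧ (∀ y, 0 ≤ q y) ∧ Integrable q μ2)
    {s1 s2 : ℝ} (hs1 : s1 ∈ hSet μ1 α P1 Q1) (hs2 : s2 ∈ hSet μ2 α P2 Q2) :
    s1 * s2 ∈ hSet (μ1.prod μ2) α
      {f | ∃ a ∈ P1, ∃ b ∈ P2, f = fun z : X × Y => a z.1 * b z.2}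
      {f | ∃ a ∈ Q1, ∃ b ∈ Q2, f = fun z : X × Y => a z.1 * b z.2} := by
  obtain ⟨p1, hp1, q1, hq1, rfl⟩ := hs1
  obtain ⟨p2, hp2, q2, hq2, rfl⟩ := hs2
  exact ⟨fun z : X × Y => p1 z.1 * p2 z.2, auxProdMemHull hp1 hp2,
    fun z : X × Y => q1 z.1 * q2 z.2, auxProdMemHull hq1 hq2,
    (auxProdFact μ1 μ2 (auxRegular hP1 hp1).2.1 (auxRegular hP2 hp2).2.1
      (auxRegular hQ1 hq1).2.1 (auxRegular hQ2 hq2).2.1).symm⟩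

end HSet
section Inner

variable {Y : Type*} [MeasurableSpace Y]

lemma auxInner (μ2 : Measure Y) {P2 Q2 : Set (Y → ℝ)}
    (hP2 : ∀ p ∈ P2, Measurable p ∧ (∀ y, 0 ≤ p y) ∧ Integrable p μ2)
    (hQ2 : ∀ q ∈ Q2, Measurable q ∧ (∀ y, 0 ≤ q y) ∧ Integrable q μ2)
    {α : ℝ} (hα : α ∈ Set.Ioo (0 : ℝ) 1) (hB2 : BddAbove (hSet μ2 α P2 Q2))
    {ι κ : Type*} [Fintype ι] [Fintype κ]
    (w c : ι → ℝ) (z2 : ι → Y → ℝ) (v d : κ → ℝ) (u2 : κ → Y → ℝ)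
    (hw0 : ∀ i, 0 ≤ w i) (hc0 : ∀ i, 0 ≤ c i) (hz2 : ∀ i, z2 i ∈ P2)
    (hv0 : ∀ j, 0 ≤ v j) (hd0 : ∀ j, 0 ≤ d j) (hu2 : ∀ j, u2 j ∈ Q2) :
    ∫ y, (∑ i, w i * (c i * z2 i y)) ^ α * (∑ j, v j * (d j * u2 j y)) ^ (1 - α) ∂μ2
      ≤ ((∑ i, w i * c i) ^ α * (∑ j, v j * d j) ^ (1 - α)) * sSup (hSet μ2 α P2 Q2) := by
  have h1α0 : (0 : ℝ) < 1 - α := by linarith [hα.2]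
  have hA0 : (0 : ℝ) ≤ ∑ i, w i * c i :=
    Finset.sum_nonneg fun i _ => mul_nonneg (hw0 i) (hc0 i)
  have hB0 : (0 : ℝ) ≤ ∑ j, v j * d j :=
    Finset.sum_nonneg fun j _ => mul_nonneg (hv0 j) (hd0 j)
  rcases eq_or_lt_of_le hA0 with hA | hA
  · -- A = 0
    have hterm : ∀ i, w i * c i = 0 := fun i =>
      (Finset.sum_eq_zero_iff_of_nonneg
        (fun i _ => mul_nonneg (hw0 i) (hc0 i))).1 hA.symm i (Finset.mem_univ i)
    have hzero : ∀ y, (∑ i, w i * (c i * z2 i y)) ^ α * (∑ j, v j * (d j * u2 j y)) ^ (1 - α)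
        = 0 := by
      intro y
      have hsum : (∑ i, w i * (c i * z2 i y)) = 0 := Finset.sum_eq_zero fun i _ => by
        have h : w i * (c i * z2 i y) = (w i * c i) * z2 i y := by ring
        rw [h, hterm i, zero_mul]
      rw [hsum, Real.zero_rpow hα.1.ne', zero_mul]
    rw [show (∫ y, (∑ i, w i * (c i * z2 i y)) ^ α * (∑ j, v j * (d j * u2 j y)) ^ (1 - α) ∂μ2)
        = 0 by simp only [hzero, integral_zero]]
    rw [← hA, Real.zero_rpow hα.1.ne', zero_mul, zero_mul]
  rcases eq_or_lt_of_le hB0 with hB | hB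
  · -- B = 0
    have hterm : ∀ j, v j * d j = 0 := fun j =>
      (Finset.sum_eq_zero_iff_of_nonneg
        (fun j _ => mul_nonneg (hv0 j) (hd0 j))).1 hB.symm j (Finset.mem_univ j)
    have hzero : ∀ y, (∑ i, w i * (c i * z2 i y)) ^ α * (∑ j, v j * (d j * u2 j y)) ^ (1 - α)
        = 0 := by
      intro y
      have hsum : (∑ j, v j * (d j * u2 j y)) = 0 := Finset.sum_eq_zero fun j _ => by
        have h : v j * (d j * u2 j y) = (v j * d j) * u2 j y := by ring
        rw [h, hterm j, zero_mul]
      rw [hsum, Real.zero_rpow h1α0.ne', mul_zero]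
    rw [show (∫ y, (∑ i, w i * (c i * z2 i y)) ^ α * (∑ j, v j * (d j * u2 j y)) ^ (1 - α) ∂μ2)
        = 0 by simp only [hzero, integral_zero]]
    rw [← hB, Real.zero_rpow h1α0.ne', mul_zero, zero_mul]
  · -- A > 0, B > 0
    have hAne : (∑ i, w i * c i) ≠ 0 := hA.ne'
    have hBne : (∑ j, v j * d j) ≠ 0 := hB.ne'
    have hg0 : ∀ y, (0:ℝ) ≤ ∑ i, (w i * c i / (∑ i', w i' * c i')) * z2 i y := fun y =>
      Finset.sum_nonneg fun i _ => mul_nonneg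
        (div_nonneg (mul_nonneg (hw0 i) (hc0 i)) hA.le) ((hP2 _ (hz2 i)).2.1 y)
    have hh0 : ∀ y, (0:ℝ) ≤ ∑ j, (v j * d j / (∑ j', v j' * d j')) * u2 j y := fun y =>
      Finset.sum_nonneg fun j _ => mul_nonneg
        (div_nonneg (mul_nonneg (hv0 j) (hd0 j)) hB.le) ((hQ2 _ (hu2 j)).2.1 y)
    have hg_mem : (fun y => ∑ i, (w i * c i / (∑ i', w i' * c i')) * z2 i y)
        ∈ convexHull ℝ P2 :=
      auxMemHull _ z2 (fun i => div_nonneg (mul_nonneg (hw0 i) (hc0 i)) hA.le)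
        (by rw [← Finset.sum_div, div_self hAne]) hz2
    have hh_mem : (fun y => ∑ j, (v j * d j / (∑ j', v j' * d j')) * u2 j y)
        ∈ convexHull ℝ Q2 :=
      auxMemHull _ u2 (fun j => div_nonneg (mul_nonneg (hv0 j) (hd0 j)) hB.le)
        (by rw [← Finset.sum_div, div_self hBne]) hu2
    have hpg : ∀ y, (∑ i, w i * (c i * z2 i y))
        = (∑ i', w i' * c i') * ∑ i, (w i * c i / (∑ i', w i' * c i')) * z2 i y := by
      intro y
      rw [Finset.mul_sum]
      refine Finset.sum_congr rfl fun i _ => ?_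
      field_simp
    have hqh : ∀ y, (∑ j, v j * (d j * u2 j y))
        = (∑ j', v j' * d j') * ∑ j, (v j * d j / (∑ j', v j' * d j')) * u2 j y := by
      intro y
      rw [Finset.mul_sum]
      refine Finset.sum_congr rfl fun j _ => ?_
      field_simp
    calc ∫ y, (∑ i, w i * (c i * z2 i y)) ^ α * (∑ j, v j * (d j * u2 j y)) ^ (1 - α) ∂μ2
        = ∫ y, ((∑ i', w i' * c i') ^ α * (∑ j', v j' * d j') ^ (1 - α)) *
            ((∑ i, (w i * c i / (∑ i', w i' * c i')) * z2 i y) ^ α *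
             (∑ j, (v j * d j / (∑ j', v j' * d j')) * u2 j y) ^ (1 - α)) ∂μ2 := by
          congr 1
          funext y
          rw [hpg y, hqh y, Real.mul_rpow hA.le (hg0 y), Real.mul_rpow hB.le (hh0 y)]
          ring
      _ = ((∑ i', w i' * c i') ^ α * (∑ j', v j' * d j') ^ (1 - α)) *
            ∫ y, (∑ i, (w i * c i / (∑ i', w i' * c i')) * z2 i y) ^ α *
             (∑ j, (v j * d j / (∑ j', v j' * d j')) * u2 j y) ^ (1 - α) ∂μ2 :=
          MeasureTheory.integral_const_mul _ _
      _ ≤ ((∑ i, w i * c i) ^ α * (∑ j, v j * d j) ^ (1 - α)) * sSup (hSet μ2 α P2 Q2) := by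
          refine mul_le_mul_of_nonneg_left ?_
            (mul_nonneg (Real.rpow_nonneg hA.le _) (Real.rpow_nonneg hB.le _))
          exact le_csSup hB2 ⟨_, hg_mem, _, hh_mem, rfl⟩

end Inner
section Key

variable {X Y : Type*} [MeasurableSpace X] [MeasurableSpace Y]

lemma auxKey (μ1 : Measure X) (μ2 : Measure Y) [SigmaFinite μ1] [SigmaFinite μ2]
    {P1 Q1 : Set (X → ℝ)} {P2 Q2 : Set (Y → ℝ)}
    (hP1 : ∀ p ∈ P1, Measurable p ∧ (∀ x, 0 ≤ p x) ∧ Integrable p μ1)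
    (hQ1 : ∀ q ∈ Q1, Measurable q ∧ (∀ x, 0 ≤ q x) ∧ Integrable q μ1)
    (hP2 : ∀ p ∈ P2, Measurable p ∧ (∀ y, 0 ≤ p y) ∧ Integrable p μ2)
    (hQ2 : ∀ q ∈ Q2, Measurable q ∧ (∀ y, 0 ≤ q y) ∧ Integrable q μ2)
    {α : ℝ} (hα : α ∈ Set.Ioo (0 : ℝ) 1) (hB2 : BddAbove (hSet μ2 α P2 Q2)) {r : ℝ}
    (hr : r ∈ hSet (μ1.prod μ2) α
      {f | ∃ a ∈ P1, ∃ b ∈ P2, f = fun z : X × Y => a z.1 * b z.2}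
      {f | ∃ a ∈ Q1, ∃ b ∈ Q2, f = fun z : X × Y => a z.1 * b z.2}) :
    ∃ s1 ∈ hSet μ1 α P1 Q1, r ≤ s1 * sSup (hSet μ2 α P2 Q2) := by
  have h1α0 : (0 : ℝ) < 1 - α := by linarith [hα.2]
  obtain ⟨p, hp, q, hq, rfl⟩ := hr
  obtain ⟨ι, _, w, zp, hw0, hw1, hzp, hrepp⟩ := auxHullRep hp
  obtain ⟨κ, _, v, zq, hv0, hv1, hzq, hrepq⟩ := auxHullRep hq
  simp only [Set.mem_setOf_eq] at hzp hzq
  choose z1 hz1 z2 hz2 hzz using hzp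
  choose u1 hu1 u2 hu2 huu using hzq
  have hz1R := fun i => hP1 _ (hz1 i)
  have hz2R := fun i => hP2 _ (hz2 i)
  have hu1R := fun j => hQ1 _ (hu1 j)
  have hu2R := fun j => hQ2 _ (hu2 j)
  have hp_eq : p = fun zz : X × Y => ∑ i, w i * (z1 i zz.1 * z2 i zz.2) := by
    funext zz
    rw [hrepp zz]
    exact Finset.sum_congr rfl fun i _ => by rw [hzz i]
  have hq_eq : q = fun zz : X × Y => ∑ j, v j * (u1 j zz.1 * u2 j zz.2) := by
    funext zz
    rw [hrepq zz]
    exact Finset.sum_congr rfl fun j _ => by rw [huu j]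
  -- regularity of p, q on the product space
  have h_pm : Measurable p := by
    rw [hp_eq]
    exact Finset.measurable_sum _ fun i _ =>
      (((hz1R i).1.comp measurable_fst).mul ((hz2R i).1.comp measurable_snd)).const_mul (w i)
  have h_p0 : ∀ zz, 0 ≤ p zz := by
    intro zz
    rw [hp_eq]
    exact Finset.sum_nonneg fun i _ =>
      mul_nonneg (hw0 i) (mul_nonneg ((hz1R i).2.1 _) ((hz2R i).2.1 _))
  have h_pi : Integrable p (μ1.prod μ2) := by
    rw [hp_eq]
    exact integrable_finset_sum _ fun i _ =>
      (((hz1R i).2.2).mul_prod ((hz2R i).2.2)).const_mul (w i)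
  have h_qm : Measurable q := by
    rw [hq_eq]
    exact Finset.measurable_sum _ fun j _ =>
      (((hu1R j).1.comp measurable_fst).mul ((hu2R j).1.comp measurable_snd)).const_mul (v j)
  have h_q0 : ∀ zz, 0 ≤ q zz := by
    intro zz
    rw [hq_eq]
    exact Finset.sum_nonneg fun j _ =>
      mul_nonneg (hv0 j) (mul_nonneg ((hu1R j).2.1 _) ((hu2R j).2.1 _))
  have h_qi : Integrable q (μ1.prod μ2) := by
    rw [hq_eq]
    exact integrable_finset_sum _ fun j _ =>
      (((hu1R j).2.2).mul_prod ((hu2R j).2.2)).const_mul (v j)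
  have hF_int : Integrable (fun zz => p zz ^ α * q zz ^ (1 - α)) (μ1.prod μ2) :=
    auxIntegrand h_pm h_p0 h_pi h_qm h_q0 h_qi hα
  -- the marginal mixtures
  have ha_mem : (fun x => ∑ i, w i * z1 i x) ∈ convexHull ℝ P1 :=
    auxMemHull w z1 hw0 hw1 hz1
  have hb_mem : (fun x => ∑ j, v j * u1 j x) ∈ convexHull ℝ Q1 :=
    auxMemHull v u1 hv0 hv1 hu1
  have haR := auxRegular hP1 ha_mem
  have hbR := auxRegular hQ1 hb_mem
  -- pointwise inner bound
  have hinner : ∀ x, (∫ y, p (x, y) ^ α * q (x, y) ^ (1 - α) ∂μ2)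
      ≤ ((∑ i, w i * z1 i x) ^ α * (∑ j, v j * u1 j x) ^ (1 - α))
          * sSup (hSet μ2 α P2 Q2) := by
    intro x
    have h := auxInner μ2 hP2 hQ2 hα hB2 w (fun i => z1 i x) z2 v (fun j => u1 j x) u2
      hw0 (fun i => (hz1R i).2.1 x) hz2 hv0 (fun j => (hu1R j).2.1 x) hu2
    simpa only [hp_eq, hq_eq] using h
  refine ⟨∫ x, (∑ i, w i * z1 i x) ^ α * (∑ j, v j * u1 j x) ^ (1 - α) ∂μ1,
    ⟨_, ha_mem, _, hb_mem, rfl⟩, ?_⟩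
  have hr_eq : (∫ zz, p zz ^ α * q zz ^ (1 - α) ∂(μ1.prod μ2))
      = ∫ x, ∫ y, p (x, y) ^ α * q (x, y) ^ (1 - α) ∂μ2 ∂μ1 :=
    MeasureTheory.integral_prod _ hF_int
  rw [hr_eq]
  calc (∫ x, ∫ y, p (x, y) ^ α * q (x, y) ^ (1 - α) ∂μ2 ∂μ1)
      ≤ ∫ x, ((∑ i, w i * z1 i x) ^ α * (∑ j, v j * u1 j x) ^ (1 - α))
          * sSup (hSet μ2 α P2 Q2) ∂μ1 :=
        integral_mono hF_int.integral_prod_left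
          ((auxIntegrand haR.1 haR.2.1 haR.2.2 hbR.1 hbR.2.1 hbR.2.2 hα).mul_const _) hinner
    _ = (∫ x, (∑ i, w i * z1 i x) ^ α * (∑ j, v j * u1 j x) ^ (1 - α) ∂μ1)
          * sSup (hSet μ2 α P2 Q2) := MeasureTheory.integral_mul_const _ _

end Key
section Zero

variable {X Y : Type*} [MeasurableSpace X] [MeasurableSpace Y]

lemma auxZero (μ1 : Measure X) (μ2 : Measure Y) [SigmaFinite μ1] [SigmaFinite μ2]
    {P1 Q1 : Set (X → ℝ)} {P2 Q2 : Set (Y → ℝ)}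
    (hP1 : ∀ p ∈ P1, Measurable p ∧ (∀ x, 0 ≤ p x) ∧ Integrable p μ1)
    (hQ1 : ∀ q ∈ Q1, Measurable q ∧ (∀ x, 0 ≤ q x) ∧ Integrable q μ1)
    (hP2 : ∀ p ∈ P2, Measurable p ∧ (∀ y, 0 ≤ p y) ∧ Integrable p μ2)
    (hQ2 : ∀ q ∈ Q2, Measurable q ∧ (∀ y, 0 ≤ q y) ∧ Integrable q μ2)
    {α : ℝ} (hα : α ∈ Set.Ioo (0 : ℝ) 1)
    (h0 : (∀ s ∈ hSet μ1 α P1 Q1, s ≤ 0) ∨ (∀ s ∈ hSet μ2 α P2 Q2, s ≤ 0)) :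
    ∀ r ∈ hSet (μ1.prod μ2) α
      {f | ∃ a ∈ P1, ∃ b ∈ P2, f = fun z : X × Y => a z.1 * b z.2}
      {f | ∃ a ∈ Q1, ∃ b ∈ Q2, f = fun z : X × Y => a z.1 * b z.2}, r ≤ 0 := by
  have h1α0 : (0 : ℝ) < 1 - α := by linarith [hα.2]
  rintro r ⟨p, hp, q, hq, rfl⟩
  obtain ⟨ι, _, w, zp, hw0, hw1, hzp, hrepp⟩ := auxHullRep hp
  obtain ⟨κ, _, v, zq, hv0, hv1, hzq, hrepq⟩ := auxHullRep hq
  simp only [Set.mem_setOf_eq] at hzp hzq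
  choose z1 hz1 z2 hz2 hzz using hzp
  choose u1 hu1 u2 hu2 huu using hzq
  have hz1R := fun i => hP1 _ (hz1 i)
  have hz2R := fun i => hP2 _ (hz2 i)
  have hu1R := fun j => hQ1 _ (hu1 j)
  have hu2R := fun j => hQ2 _ (hu2 j)
  have hp_eq : p = fun zz : X × Y => ∑ i, w i * (z1 i zz.1 * z2 i zz.2) := by
    funext zz
    rw [hrepp zz]
    exact Finset.sum_congr rfl fun i _ => by rw [hzz i]
  have hq_eq : q = fun zz : X × Y => ∑ j, v j * (u1 j zz.1 * u2 j zz.2) := by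
    funext zz
    rw [hrepq zz]
    exact Finset.sum_congr rfl fun j _ => by rw [huu j]
  have h_pm : Measurable p := by
    rw [hp_eq]
    exact Finset.measurable_sum _ fun i _ =>
      (((hz1R i).1.comp measurable_fst).mul ((hz2R i).1.comp measurable_snd)).const_mul (w i)
  have h_p0 : ∀ zz, 0 ≤ p zz := by
    intro zz
    rw [hp_eq]
    exact Finset.sum_nonneg fun i _ =>
      mul_nonneg (hw0 i) (mul_nonneg ((hz1R i).2.1 _) ((hz2R i).2.1 _))
  have h_pi : Integrable p (μ1.prod μ2) := by
    rw [hp_eq]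
    exact integrable_finset_sum _ fun i _ =>
      (((hz1R i).2.2).mul_prod ((hz2R i).2.2)).const_mul (w i)
  have h_qm : Measurable q := by
    rw [hq_eq]
    exact Finset.measurable_sum _ fun j _ =>
      (((hu1R j).1.comp measurable_fst).mul ((hu2R j).1.comp measurable_snd)).const_mul (v j)
  have h_q0 : ∀ zz, 0 ≤ q zz := by
    intro zz
    rw [hq_eq]
    exact Finset.sum_nonneg fun j _ =>
      mul_nonneg (hv0 j) (mul_nonneg ((hu1R j).2.1 _) ((hu2R j).2.1 _))
  have h_qi : Integrable q (μ1.prod μ2) := by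
    rw [hq_eq]
    exact integrable_finset_sum _ fun j _ =>
      (((hu1R j).2.2).mul_prod ((hu2R j).2.2)).const_mul (v j)
  have hF_int : Integrable (fun zz => p zz ^ α * q zz ^ (1 - α)) (μ1.prod μ2) :=
    auxIntegrand h_pm h_p0 h_pi h_qm h_q0 h_qi hα
  -- the dominating separable function
  have hT_int : ∀ (i : ι) (j : κ), Integrable (fun zz : X × Y =>
      ((w i ^ α * v j ^ (1 - α)) * (z1 i zz.1 ^ α * u1 j zz.1 ^ (1 - α)))
        * (z2 i zz.2 ^ α * u2 j zz.2 ^ (1 - α))) (μ1.prod μ2) := fun i j =>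
    ((auxIntegrand (hz1R i).1 (hz1R i).2.1 (hz1R i).2.2
        (hu1R j).1 (hu1R j).2.1 (hu1R j).2.2 hα).const_mul _).mul_prod
      (auxIntegrand (hz2R i).1 (hz2R i).2.1 (hz2R i).2.2
        (hu2R j).1 (hu2R j).2.1 (hu2R j).2.2 hα)
  have hG_int : Integrable (fun zz : X × Y => ∑ i, ∑ j,
      ((w i ^ α * v j ^ (1 - α)) * (z1 i zz.1 ^ α * u1 j zz.1 ^ (1 - α)))
        * (z2 i zz.2 ^ α * u2 j zz.2 ^ (1 - α))) (μ1.prod μ2) :=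
    integrable_finset_sum _ fun i _ => integrable_finset_sum _ fun j _ => hT_int i j
  have hFG : ∀ zz : X × Y, p zz ^ α * q zz ^ (1 - α) ≤ ∑ i, ∑ j,
      ((w i ^ α * v j ^ (1 - α)) * (z1 i zz.1 ^ α * u1 j zz.1 ^ (1 - α)))
        * (z2 i zz.2 ^ α * u2 j zz.2 ^ (1 - α)) := by
    intro zz
    have hterm0 : ∀ i, 0 ≤ w i * (z1 i zz.1 * z2 i zz.2) := fun i =>
      mul_nonneg (hw0 i) (mul_nonneg ((hz1R i).2.1 _) ((hz2R i).2.1 _))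
    have hterm0' : ∀ j, 0 ≤ v j * (u1 j zz.1 * u2 j zz.2) := fun j =>
      mul_nonneg (hv0 j) (mul_nonneg ((hu1R j).2.1 _) ((hu2R j).2.1 _))
    calc p zz ^ α * q zz ^ (1 - α)
        ≤ (∑ i, (w i * (z1 i zz.1 * z2 i zz.2)) ^ α)
            * (∑ j, (v j * (u1 j zz.1 * u2 j zz.2)) ^ (1 - α)) := by
          rw [hp_eq, hq_eq]
          exact mul_le_mul
            (auxSumRpow _ _ hterm0 hα.1 hα.2.le)
            (auxSumRpow _ _ hterm0' h1α0 (by linarith [hα.1]))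
            (Real.rpow_nonneg (Finset.sum_nonneg fun j _ => hterm0' j) _)
            (Finset.sum_nonneg fun i _ => Real.rpow_nonneg (hterm0 i) _)
      _ = _ := by
          rw [Fintype.sum_mul_sum]
          refine Finset.sum_congr rfl fun i _ => Finset.sum_congr rfl fun j _ => ?_
          rw [Real.mul_rpow (hw0 i) (mul_nonneg ((hz1R i).2.1 _) ((hz2R i).2.1 _)),
            Real.mul_rpow ((hz1R i).2.1 _) ((hz2R i).2.1 _),
            Real.mul_rpow (hv0 j) (mul_nonneg ((hu1R j).2.1 _) ((hu2R j).2.1 _)),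
            Real.mul_rpow ((hu1R j).2.1 _) ((hu2R j).2.1 _)]
          ring
  have hG_sum : (∫ zz : X × Y, (∑ i, ∑ j,
      ((w i ^ α * v j ^ (1 - α)) * (z1 i zz.1 ^ α * u1 j zz.1 ^ (1 - α)))
        * (z2 i zz.2 ^ α * u2 j zz.2 ^ (1 - α))) ∂(μ1.prod μ2))
      = ∑ i, ∑ j, ((w i ^ α * v j ^ (1 - α))
          * ∫ x, z1 i x ^ α * u1 j x ^ (1 - α) ∂μ1)
          * ∫ y, z2 i y ^ α * u2 j y ^ (1 - α) ∂μ2 := by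
    rw [integral_finset_sum _ (fun i _ => integrable_finset_sum _ fun j _ => hT_int i j)]
    refine Finset.sum_congr rfl fun i _ => ?_
    rw [integral_finset_sum _ fun j _ => hT_int i j]
    refine Finset.sum_congr rfl fun j _ => ?_
    rw [MeasureTheory.integral_prod_mul
      (f := fun x => (w i ^ α * v j ^ (1 - α)) * (z1 i x ^ α * u1 j x ^ (1 - α)))
      (g := fun y => z2 i y ^ α * u2 j y ^ (1 - α)), MeasureTheory.integral_const_mul]
  have hzero : ∀ (i : ι) (j : κ), ((w i ^ α * v j ^ (1 - α))
      * ∫ x, z1 i x ^ α * u1 j x ^ (1 - α) ∂μ1)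
      * (∫ y, z2 i y ^ α * u2 j y ^ (1 - α) ∂μ2) = 0 := by
    intro i j
    rcases h0 with h0 | h0
    · have h1 : (∫ x, z1 i x ^ α * u1 j x ^ (1 - α) ∂μ1) = 0 :=
        le_antisymm (h0 _ ⟨z1 i, subset_convexHull ℝ P1 (hz1 i), u1 j,
            subset_convexHull ℝ Q1 (hu1 j), rfl⟩)
          (integral_nonneg fun x => mul_nonneg (Real.rpow_nonneg ((hz1R i).2.1 x) _)
            (Real.rpow_nonneg ((hu1R j).2.1 x) _))
      rw [h1, mul_zero, zero_mul]
    · have h2 : (∫ y, z2 i y ^ α * u2 j y ^ (1 - α) ∂μ2) = 0 :=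
        le_antisymm (h0 _ ⟨z2 i, subset_convexHull ℝ P2 (hz2 i), u2 j,
            subset_convexHull ℝ Q2 (hu2 j), rfl⟩)
          (integral_nonneg fun y => mul_nonneg (Real.rpow_nonneg ((hz2R i).2.1 y) _)
            (Real.rpow_nonneg ((hu2R j).2.1 y) _))
      rw [h2, mul_zero]
  calc (∫ zz, p zz ^ α * q zz ^ (1 - α) ∂(μ1.prod μ2))
      ≤ ∫ zz : X × Y, (∑ i, ∑ j,
          ((w i ^ α * v j ^ (1 - α)) * (z1 i zz.1 ^ α * u1 j zz.1 ^ (1 - α)))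
            * (z2 i zz.2 ^ α * u2 j zz.2 ^ (1 - α))) ∂(μ1.prod μ2) :=
        integral_mono hF_int hG_int hFG
    _ = 0 := by
        rw [hG_sum]
        exact Finset.sum_eq_zero fun i _ => Finset.sum_eq_zero fun j _ => hzero i j

end Zero
end AuxiliaryLemmas

/-- The Hellinger transform over convex hulls of classes of densities relative to `μ`:
`ρ_α(Ps, Qs) = sup {∫ p^α q^{1-α} dμ : p ∈ conv(Ps), q ∈ conv(Qs)}`. -/
noncomputable def rhoHull {X : Type*} [MeasurableSpace X] (μ : Measure X) (α : ℝ)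
    (Ps Qs : Set (X → ℝ)) : ℝ :=
  sSup {r | ∃ p ∈ convexHull ℝ Ps, ∃ q ∈ convexHull ℝ Qs,
    r = ∫ x, p x ^ α * q x ^ (1 - α) ∂μ}

/-- The Hellinger transform is sub-multiplicative under products:
for classes `P1, P2, Q1, Q2` of (densities of) finite measures and `0 < α < 1`,
`ρ_α(P1 × P2, Q1 × Q2) ≤ ρ_α(P1, Q1) · ρ_α(P2, Q2)`, where `P1 × P2` denotes the class of
product densities `(x,y) ↦ p1(x) p2(y)` with `p1 ∈ P1`, `p2 ∈ P2`, relative to `μ1 × μ2`. -/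
theorem stmt11 {X Y : Type*} [MeasurableSpace X] [MeasurableSpace Y]
    (μ1 : Measure X) (μ2 : Measure Y) [SigmaFinite μ1] [SigmaFinite μ2]
    (P1 Q1 : Set (X → ℝ)) (P2 Q2 : Set (Y → ℝ))
    (hP1 : ∀ p ∈ P1, Measurable p ∧ (∀ x, 0 ≤ p x) ∧ Integrable p μ1)
    (hQ1 : ∀ q ∈ Q1, Measurable q ∧ (∀ x, 0 ≤ q x) ∧ Integrable q μ1)
    (hP2 : ∀ p ∈ P2, Measurable p ∧ (∀ y, 0 ≤ p y) ∧ Integrable p μ2)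
    (hQ2 : ∀ q ∈ Q2, Measurable q ∧ (∀ y, 0 ≤ q y) ∧ Integrable q μ2)
    (α : ℝ) (hα : α ∈ Set.Ioo (0 : ℝ) 1) :
    rhoHull (μ1.prod μ2) α
      {f | ∃ p1 ∈ P1, ∃ p2 ∈ P2, f = fun z : X × Y => p1 z.1 * p2 z.2}
      {f | ∃ q1 ∈ Q1, ∃ q2 ∈ Q2, f = fun z : X × Y => q1 z.1 * q2 z.2} ≤
    rhoHull μ1 α P1 Q1 * rhoHull μ2 α P2 Q2 := by
  have hEq : rhoHull (μ1.prod μ2) α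
      {f | ∃ p1 ∈ P1, ∃ p2 ∈ P2, f = fun z : X × Y => p1 z.1 * p2 z.2}
      {f | ∃ q1 ∈ Q1, ∃ q2 ∈ Q2, f = fun z : X × Y => q1 z.1 * q2 z.2}
      = sSup (hSet (μ1.prod μ2) α
        {f | ∃ a ∈ P1, ∃ b ∈ P2, f = fun z : X × Y => a z.1 * b z.2}
        {f | ∃ a ∈ Q1, ∃ b ∈ Q2, f = fun z : X × Y => a z.1 * b z.2}) := rfl
  have hEq1 : rhoHull μ1 α P1 Q1 = sSup (hSet μ1 α P1 Q1) := rfl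
  have hEq2 : rhoHull μ2 α P2 Q2 = sSup (hSet μ2 α P2 Q2) := rfl
  rw [hEq, hEq1, hEq2]
  have hρ1_0 : 0 ≤ sSup (hSet μ1 α P1 Q1) :=
    Real.sSup_nonneg (hSet_nonneg hP1 hQ1)
  have hρ2_0 : 0 ≤ sSup (hSet μ2 α P2 Q2) :=
    Real.sSup_nonneg (hSet_nonneg hP2 hQ2)
  by_cases hB1 : BddAbove (hSet μ1 α P1 Q1)
  · by_cases hB2 : BddAbove (hSet μ2 α P2 Q2)
    · refine Real.sSup_le (fun r hr => ?_) (mul_nonneg hρ1_0 hρ2_0)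
      obtain ⟨s1, hs1, hle⟩ := auxKey μ1 μ2 hP1 hQ1 hP2 hQ2 hα hB2 hr
      exact hle.trans (mul_le_mul_of_nonneg_right (le_csSup hB1 hs1) hρ2_0)
    · rw [Real.sSup_of_not_bddAbove hB2, mul_zero]
      by_cases hpos : ∃ s1 ∈ hSet μ1 α P1 Q1, 0 < s1
      · obtain ⟨s1, hs1, hs1pos⟩ := hpos
        have hnb : ¬ BddAbove (hSet (μ1.prod μ2) α
            {f | ∃ a ∈ P1, ∃ b ∈ P2, f = fun z : X × Y => a z.1 * b z.2}
            {f | ∃ a ∈ Q1, ∃ b ∈ Q2, f = fun z : X × Y => a z.1 * b z.2}) := by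
          rintro ⟨M, hM⟩
          rw [not_bddAbove_iff] at hB2
          obtain ⟨s2, hs2, hgt⟩ := hB2 (M / s1)
          have hmem := auxProdMemHSet μ1 μ2 hP1 hQ1 hP2 hQ2 hs1 hs2
          have hle := hM hmem
          have := (div_lt_iff₀ hs1pos).1 hgt
          linarith [mul_comm s1 s2]
        rw [Real.sSup_of_not_bddAbove hnb]
      · push_neg at hpos
        exact Real.sSup_le (auxZero μ1 μ2 hP1 hQ1 hP2 hQ2 hα (Or.inl hpos)) le_rfl
  · rw [Real.sSup_of_not_bddAbove hB1, zero_mul]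
    by_cases hpos : ∃ s2 ∈ hSet μ2 α P2 Q2, 0 < s2
    · obtain ⟨s2, hs2, hs2pos⟩ := hpos
      have hnb : ¬ BddAbove (hSet (μ1.prod μ2) α
          {f | ∃ a ∈ P1, ∃ b ∈ P2, f = fun z : X × Y => a z.1 * b z.2}
          {f | ∃ a ∈ Q1, ∃ b ∈ Q2, f = fun z : X × Y => a z.1 * b z.2}) := by
        rintro ⟨M, hM⟩
        rw [not_bddAbove_iff] at hB1
        obtain ⟨s1, hs1, hgt⟩ := hB1 (M / s2)
        have hmem := auxProdMemHSet μ1 μ2 hP1 hQ1 hP2 hQ2 hs1 hs2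
        have hle := hM hmem
        have := (div_lt_iff₀ hs2pos).1 hgt
        linarith
      rw [Real.sSup_of_not_bddAbove hnb]
    · push_neg at hpos
      exact Real.sSup_le (auxZero μ1 μ2 hP1 hQ1 hP2 hQ2 hα (Or.inr hpos)) le_rfl
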